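/- Let Q, Q' ∈ ℝ^{k×N}, c ∈ ℝ^k with cᵢ > 0, n ∈ ℕ, and let x ∈ ℕ^N be a histogram with ‖x‖₁ = n. Let M(x) be the Laplace mechanism M_{Lap,c}(x, c⊙Q'), i.e., the law of c⊙Q'x + Y with Yᵢ independent Laplace with scale cᵢ. Then ∫_{ℝ^k} ‖z − Qx‖₂² dM(x)(z) ≤ 2 ( n² ‖c⊙Q' − Q‖₂² + 2 ‖c‖₂² ), where ‖A‖₂² = Σ_{i,l} A_{i,l}² for a matrix A and ‖c‖₂² = Σᵢ cᵢ². -/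

import Mathlib

open MeasureTheory Finset

/-- Two histograms `x, x'` over a universe of size `N` are `(i,j)`-neighbors:
`‖x − x'‖₁ ≤ 2`, `xᵢ ≠ x'ᵢ` and `xⱼ ≠ x'ⱼ`. -/
def Neighbors {N : ℕ} (i j : Fin N) (x x' : Fin N → ℕ) : Prop :=
  (∑ l, |(x l : ℤ) - (x' l : ℤ)|) ≤ 2 ∧ x i ≠ x' i ∧ x j ≠ x' j

/-- `dX` is a privacy budget: nonnegative, symmetric, zero on the diagonal,
satisfying the triangle inequality. -/
def PrivacyBudget {N : ℕ} (dX : Fin N → Fin N → ℝ) : Prop :=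
  (∀ i j, 0 ≤ dX i j) ∧ (∀ i j, dX i j = dX j i) ∧ (∀ i, dX i i = 0) ∧
    (∀ i j k, dX i j ≤ dX i k + dX k j)

/-- A mechanism `M` (a map from histograms to probability measures on `Y`) is `dX`-private. -/
def DXPrivate {N : ℕ} {Y : Type*} [MeasurableSpace Y]
    (dX : Fin N → Fin N → ℝ) (M : (Fin N → ℕ) → Measure Y) : Prop :=
  ∀ i j : Fin N, i ≠ j → ∀ x x' : Fin N → ℕ, Neighbors i j x x' →
    ∀ S : Set Y, MeasurableSet S →
      M x S ≤ ENNReal.ofReal (Real.exp (dX i j)) * M x' S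

/-- The Laplace mechanism with scales `c`, centered at `a ∈ ℝ^k`. -/
noncomputable def lapMech {k : ℕ} (c a : Fin k → ℝ) : Measure (Fin k → ℝ) :=
  volume.withDensity fun z =>
    ENNReal.ofReal (∏ i, (1 / (2 * c i)) * Real.exp (-|z i - a i| / c i))

section Aux
open Real Set

lemma aux_integrableOn_rpow_exp {a r : ℝ} (ha : 0 < a) (hr : 0 < r) :
    IntegrableOn (fun t : ℝ => t ^ (a - 1) * Real.exp (-(r * t))) (Ioi 0) := by
  by_contra h
  have h2 := Real.integral_rpow_mul_exp_neg_mul_Ioi ha hr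
  rw [MeasureTheory.integral_undef h] at h2
  have h3 : (0:ℝ) < (1 / r) ^ a * Real.Gamma a := by positivity
  rw [← h2] at h3
  exact lt_irrefl _ h3

lemma aux_integrable_comp_abs {f : ℝ → ℝ} (hf : IntegrableOn f (Ioi 0)) :
    Integrable fun x : ℝ => f |x| := by
  have int_Ioi : IntegrableOn (fun x ↦ f |x|) (Ioi 0) := by
    refine hf.congr_fun (fun x hx => ?_) measurableSet_Ioi
    rw [abs_eq_self.mpr (le_of_lt hx)]
  have int_Iic : IntegrableOn (fun x ↦ f |x|) (Iic 0) := by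
    rw [← Measure.map_neg_eq_self (volume : Measure ℝ)]
    have m : MeasurableEmbedding fun x : ℝ => -x := (Homeomorph.neg ℝ).measurableEmbedding
    rw [m.integrableOn_map_iff]
    simp_rw [Function.comp_def, abs_neg, neg_preimage, neg_Iic, neg_zero]
    exact Iff.mpr integrableOn_Ici_iff_integrableOn_Ioi int_Ioi
  have : Iic (0:ℝ) ∪ Ioi 0 = Set.univ := Iic_union_Ioi
  rw [← integrableOn_univ, ← this]
  exact int_Iic.union int_Ioi

lemma aux_eq1 {c : ℝ} (hc : 0 < c) (p e : ℝ) :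
    (fun v : ℝ => (p * v ^ 2 + e) * ((1 / (2 * c)) * Real.exp (-v / c)))
      = fun v : ℝ => (p / (2 * c)) * (v ^ ((3:ℝ) - 1) * Real.exp (-(c⁻¹ * v)))
          + (e / (2 * c)) * (v ^ ((1:ℝ) - 1) * Real.exp (-(c⁻¹ * v))) := by
  funext v
  have h1 : v ^ ((3:ℝ) - 1) = v ^ 2 := by
    norm_num
  have h2 : v ^ ((1:ℝ) - 1) = 1 := by norm_num
  have h3 : -v / c = -(c⁻¹ * v) := by ring
  rw [h1, h2, h3]
  ring

lemma aux_int3 {c : ℝ} (hc : 0 < c) :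
    ∫ v in Ioi (0:ℝ), v ^ ((3:ℝ) - 1) * Real.exp (-(c⁻¹ * v)) = 2 * c ^ 3 := by
  rw [Real.integral_rpow_mul_exp_neg_mul_Ioi (by norm_num) (inv_pos.mpr hc)]
  have hG : Real.Gamma 3 = 2 := by
    have h2 : Real.Gamma 2 = 1 := Real.Gamma_two
    have : Real.Gamma (2 + 1) = 2 * Real.Gamma 2 := Real.Gamma_add_one (by norm_num)
    norm_num [h2] at this
    convert this using 2 <;> norm_num
  rw [hG, one_div, inv_inv]
  rw [show ((3:ℝ)) = ((3:ℕ):ℝ) by norm_num, Real.rpow_natCast]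
  ring

lemma aux_int1 {c : ℝ} (hc : 0 < c) :
    ∫ v in Ioi (0:ℝ), v ^ ((1:ℝ) - 1) * Real.exp (-(c⁻¹ * v)) = c := by
  rw [Real.integral_rpow_mul_exp_neg_mul_Ioi (by norm_num) (inv_pos.mpr hc)]
  rw [Real.Gamma_one, one_div, inv_inv, mul_one, Real.rpow_one]

lemma aux_integrableOn_poly_exp {c : ℝ} (hc : 0 < c) (p e : ℝ) :
    IntegrableOn (fun v : ℝ => (p * v ^ 2 + e) * ((1 / (2 * c)) * Real.exp (-v / c)))
      (Ioi 0) := by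
  rw [aux_eq1 hc p e]
  exact ((aux_integrableOn_rpow_exp (by norm_num) (inv_pos.mpr hc)).const_mul _).add
    ((aux_integrableOn_rpow_exp (by norm_num) (inv_pos.mpr hc)).const_mul _)

lemma aux_integral_Ioi {c : ℝ} (hc : 0 < c) (p e : ℝ) :
    ∫ v in Ioi (0:ℝ), (p * v ^ 2 + e) * ((1 / (2 * c)) * Real.exp (-v / c))
      = p * c ^ 2 + e / 2 := by
  rw [aux_eq1 hc p e, integral_add
    ((aux_integrableOn_rpow_exp (by norm_num) (inv_pos.mpr hc)).const_mul _)
    ((aux_integrableOn_rpow_exp (by norm_num) (inv_pos.mpr hc)).const_mul _),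
    integral_const_mul, integral_const_mul, aux_int3 hc, aux_int1 hc]
  field_simp

/-- Laplace moment: integrability and value of `∫ (p (u-a)² + e) dens`. -/
lemma lap_moment {c : ℝ} (hc : 0 < c) (p e a : ℝ) :
    Integrable (fun u : ℝ => (p * (u - a) ^ 2 + e) * ((1 / (2 * c)) * Real.exp (-|u - a| / c)))
      ∧ ∫ u : ℝ, (p * (u - a) ^ 2 + e) * ((1 / (2 * c)) * Real.exp (-|u - a| / c))
        = 2 * p * c ^ 2 + e := by
  set F : ℝ → ℝ := fun v => (p * v ^ 2 + e) * ((1 / (2 * c)) * Real.exp (-v / c)) with hF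
  have hGeq : (fun u : ℝ => (p * (u - a) ^ 2 + e) * ((1 / (2 * c)) * Real.exp (-|u - a| / c)))
      = fun u => F |u - a| := by
    funext u; simp only [hF, sq_abs]
  have hint0 : Integrable (fun u : ℝ => F |u|) :=
    aux_integrable_comp_abs (aux_integrableOn_poly_exp hc p e)
  have hval0 : ∫ u : ℝ, F |u| = 2 * p * c ^ 2 + e := by
    rw [integral_comp_abs (f := F), aux_integral_Ioi hc p e]; ring
  constructor
  · rw [hGeq]
    exact hint0.comp_sub_right a
  · rw [hGeq]
    rw [show (fun u : ℝ => F |u - a|) = fun u => (fun v => F |v|) (u - a) from rfl]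
    rw [integral_sub_right_eq_self (fun v => F |v|) a, hval0]

end Aux

set_option maxHeartbeats 2000000 in
/-- Expected squared ℓ₂ error of the dX-private Laplace mechanism:
`∫ ‖z − Qx‖₂² dM(x)(z) ≤ 2 (n² ‖c⊙Q' − Q‖₂² + 2‖c‖₂²)`. -/

theorem stmt_4 {k N : ℕ} (Q Q' : Matrix (Fin k) (Fin N) ℝ)
    (c : Fin k → ℝ) (hc : ∀ i, 0 < c i) (n : ℕ)
    (x : Fin N → ℕ) (hx : ∑ l, x l = n) :
    ∫⁻ z, ENNReal.ofReal (∑ i, (z i - Q.mulVec (fun l => (x l : ℝ)) i) ^ 2)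
        ∂ (lapMech c (fun i => c i * Q'.mulVec (fun l => (x l : ℝ)) i))
      ≤ ENNReal.ofReal (2 * ((n : ℝ) ^ 2 * (∑ i, ∑ l, (c i * Q' i l - Q i l) ^ 2)
          + 2 * ∑ i, (c i) ^ 2)) := by
  open Real in
  classical
  set A : Fin k → ℝ := fun i => c i * Q'.mulVec (fun l => (x l : ℝ)) i with hA
  set B : Fin k → ℝ := fun i => Q.mulVec (fun l => (x l : ℝ)) i with hB
  set E : Fin k → ℝ := fun i => 2 * (A i - B i) ^ 2 with hE
  set dens : Fin k → ℝ → ℝ := fun j u => (1 / (2 * c j)) * Real.exp (-|u - A j| / c j)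
    with hdens
  have hdens_nonneg : ∀ j u, 0 ≤ dens j u := fun j u => by
    have := (hc j).le; positivity
  have hdens_cont : ∀ j, Continuous (dens j) := fun j => by
    apply Continuous.mul continuous_const
    exact (Real.continuous_exp.comp
      (((continuous_abs.comp (continuous_id.sub continuous_const)).neg).div_const _))
  set g : Fin k → Fin k → ℝ → ℝ :=
    fun i j u => (if j = i then (2 * (u - A j) ^ 2 + E i) else 1) * dens j u with hg
  have hg_int : ∀ i j, Integrable (g i j) := by
    intro i j
    by_cases h : j = i
    · subst h
      simpa only [hg, hdens, if_pos rfl, eq_self_iff_true, if_true] using (lap_moment (hc j) 2 (E j) (A j)).1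
    · simp only [hg, hdens, if_neg h, one_mul]
      rw [show (fun u : ℝ => (1 / (2 * c j)) * Real.exp (-|u - A j| / c j))
          = fun u => (0 * (u - A j) ^ 2 + 1) * ((1 / (2 * c j)) * Real.exp (-|u - A j| / c j))
          by funext u; ring]
      exact (lap_moment (hc j) 0 1 (A j)).1
  have hg_val : ∀ i j, ∫ u, g i j u = if j = i then 4 * c j ^ 2 + E i else 1 := by
    intro i j
    by_cases h : j = i
    · subst h
      simp only [hg, hdens, if_pos rfl, eq_self_iff_true, if_true]
      rw [(lap_moment (hc j) 2 (E j) (A j)).2]; ring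
    · simp only [hg, hdens, if_neg h, one_mul]
      rw [show (fun u : ℝ => (1 / (2 * c j)) * Real.exp (-|u - A j| / c j))
          = fun u => (0 * (u - A j) ^ 2 + 1) * ((1 / (2 * c j)) * Real.exp (-|u - A j| / c j))
          by funext u; ring]
      rw [(lap_moment (hc j) 0 1 (A j)).2]; ring
  have hg_nonneg : ∀ i j u, 0 ≤ g i j u := by
    intro i j u
    refine mul_nonneg ?_ (hdens_nonneg j u)
    by_cases h : j = i
    · simp only [if_pos h]; have : 0 ≤ E i := by rw [hE]; positivity
      nlinarith [sq_nonneg (u - A j)]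
    · simp [if_neg h]
  -- abbreviate B inside the goal
  simp only [show ∀ i, Q.mulVec (fun l => ((x l : ℝ))) i = B i from fun _ => rfl]
  have hg_cont : ∀ i j, Continuous (g i j) := by
    intro i j
    simp only [hg]
    apply Continuous.mul _ (hdens_cont j)
    by_cases h : j = i
    · simp only [if_pos h]; continuity
    · simp only [if_neg h]; exact continuous_const
  have hmeas_dens : Measurable fun z : Fin k → ℝ => ENNReal.ofReal (∏ j, dens j (z j)) := by
    apply Measurable.ennreal_ofReal
    exact Finset.measurable_prod _ fun j _ =>
      ((hdens_cont j).measurable).comp (measurable_pi_apply j)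
  have hmeas_S : Measurable fun z : Fin k → ℝ => ENNReal.ofReal (∑ i, (z i - B i) ^ 2) := by
    apply Measurable.ennreal_ofReal
    exact Finset.measurable_sum _ fun i _ =>
      ((measurable_pi_apply i).sub measurable_const).pow_const 2
  have heqdens : (fun z : Fin k → ℝ =>
      ENNReal.ofReal (∏ i, (1 / (2 * c i)) * Real.exp (-|z i - A i| / c i)))
      = fun z => ENNReal.ofReal (∏ j, dens j (z j)) := by
    simp only [hdens]
  set S : ℝ := ∑ i, ∑ l, (c i * Q' i l - Q i l) ^ 2 with hS
  have hABi : ∀ i, A i - B i = ∑ l, (c i * Q' i l - Q i l) * (x l : ℝ) := by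
    intro i
    simp only [hA, hB, Matrix.mulVec, dotProduct, Finset.mul_sum]
    rw [← Finset.sum_sub_distrib]
    exact Finset.sum_congr rfl fun l _ => by ring
  have hxcast : ∑ l, ((x l : ℝ)) = (n : ℝ) := by
    have := congrArg (Nat.cast : ℕ → ℝ) hx
    push_cast at this
    exact this
  have hsq : ∀ i, (A i - B i) ^ 2 ≤ (∑ l, (c i * Q' i l - Q i l) ^ 2) * (n : ℝ) ^ 2 := by
    intro i
    rw [hABi i]
    calc (∑ l, (c i * Q' i l - Q i l) * (x l : ℝ)) ^ 2
        ≤ (∑ l, (c i * Q' i l - Q i l) ^ 2) * ∑ l, ((x l : ℝ)) ^ 2 :=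
          Finset.sum_mul_sq_le_sq_mul_sq _ _ _
      _ ≤ (∑ l, (c i * Q' i l - Q i l) ^ 2) * (∑ l, ((x l : ℝ))) ^ 2 := by
          refine mul_le_mul_of_nonneg_left
            (Finset.sum_sq_le_sq_sum_of_nonneg fun l _ => Nat.cast_nonneg _) ?_
          positivity
      _ = (∑ l, (c i * Q' i l - Q i l) ^ 2) * (n : ℝ) ^ 2 := by rw [hxcast]
  calc ∫⁻ z : Fin k → ℝ, ENNReal.ofReal (∑ i, (z i - B i) ^ 2) ∂ lapMech c A
      = ∫⁻ z : Fin k → ℝ, ENNReal.ofReal (∏ j, dens j (z j))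
          * ENNReal.ofReal (∑ i, (z i - B i) ^ 2) := by
        rw [lapMech, heqdens, lintegral_withDensity_eq_lintegral_mul _ hmeas_dens hmeas_S]
        rfl
    _ ≤ ∫⁻ z : Fin k → ℝ, ENNReal.ofReal (∑ i, ∏ j, g i j (z j)) := by
        refine lintegral_mono fun z => ?_
        rw [← ENNReal.ofReal_mul (Finset.prod_nonneg fun j _ => hdens_nonneg j (z j))]
        apply ENNReal.ofReal_le_ofReal
        rw [Finset.mul_sum]
        refine Finset.sum_le_sum fun i _ => ?_
        have hprod : ∏ j, g i j (z j)
            = (2 * (z i - A i) ^ 2 + E i) * ∏ j, dens j (z j) := by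
          simp only [hg]
          rw [Finset.prod_mul_distrib,
            Finset.prod_ite_eq' Finset.univ i (fun j => 2 * (z j - A j) ^ 2 + E i)]
          simp
        rw [hprod, mul_comm (∏ j, dens j (z j))]
        refine mul_le_mul_of_nonneg_right ?_
          (Finset.prod_nonneg fun j _ => hdens_nonneg j (z j))
        simp only [hE]
        nlinarith [sq_nonneg ((z i - A i) - (A i - B i))]
    _ = ∑ i, ∫⁻ z : Fin k → ℝ, ENNReal.ofReal (∏ j, g i j (z j)) := by
        have hpt : ∀ z : Fin k → ℝ, ENNReal.ofReal (∑ i, ∏ j, g i j (z j))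
            = ∑ i, ENNReal.ofReal (∏ j, g i j (z j)) := fun z =>
          ENNReal.ofReal_sum_of_nonneg fun i _ =>
            Finset.prod_nonneg fun j _ => hg_nonneg i j (z j)
        simp_rw [hpt]
        exact lintegral_finset_sum _ fun i _ =>
          Measurable.ennreal_ofReal <| Finset.measurable_prod _ fun j _ =>
            ((hg_cont i j).measurable).comp (measurable_pi_apply j)
    _ = ∑ i, ENNReal.ofReal (∫ z : Fin k → ℝ, ∏ j, g i j (z j)) := by
        refine Finset.sum_congr rfl fun i _ => ?_
        exact (MeasureTheory.ofReal_integral_eq_lintegral_ofReal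
          (Integrable.fintype_prod fun j => hg_int i j)
          (ae_of_all _ fun z => Finset.prod_nonneg fun j _ => hg_nonneg i j (z j))).symm
    _ = ∑ i, ENNReal.ofReal (4 * c i ^ 2 + E i) := by
        refine Finset.sum_congr rfl fun i _ => ?_
        rw [MeasureTheory.integral_fintype_prod_volume_eq_prod (g i)]
        congr 1
        rw [Finset.prod_congr rfl fun j _ => hg_val i j,
          Finset.prod_ite_eq' Finset.univ i (fun j => 4 * c j ^ 2 + E i)]
        simp
    _ = ENNReal.ofReal (∑ i, (4 * c i ^ 2 + E i)) := by
        refine (ENNReal.ofReal_sum_of_nonneg fun i _ => ?_).symm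
        simp only [hE]; positivity
    _ ≤ ENNReal.ofReal (2 * ((n : ℝ) ^ 2 * S + 2 * ∑ i, (c i) ^ 2)) := by
        apply ENNReal.ofReal_le_ofReal
        have h1 : ∑ i, (A i - B i) ^ 2 ≤ (n : ℝ) ^ 2 * S := by
          calc ∑ i, (A i - B i) ^ 2
              ≤ ∑ i, (∑ l, (c i * Q' i l - Q i l) ^ 2) * (n : ℝ) ^ 2 :=
                Finset.sum_le_sum fun i _ => hsq i
            _ = (n : ℝ) ^ 2 * S := by rw [← Finset.sum_mul, hS]; ring
        have h2 : ∑ i, (4 * c i ^ 2 + E i)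
            = 4 * ∑ i, c i ^ 2 + 2 * ∑ i, (A i - B i) ^ 2 := by
          simp only [hE]
          rw [Finset.sum_add_distrib, ← Finset.mul_sum, ← Finset.mul_sum]
        linarith
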